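/- If A is a set of vectors in {0,1}^d such that any two vectors in A have Hamming distance at most 2t, and d > 2t, then |A| ≤ ∑_{i=0}^{t} C(d,i). -/

import Mathlib

/-- Hamming distance between binary vectors. -/
def distB {d : ℕ} (u v : Fin d → Bool) : ℕ :=
  (Finset.univ.filter (fun i => u i ≠ v i)).card

/-- Hamming distance between vectors in {0,1,*}^d (entries `Option Bool`, `none` = joker):
counts coordinates where both entries are non-joker and differ. -/
def distS {d : ℕ} (u v : Fin d → Option Bool) : ℕ :=
  (Finset.univ.filter (fun i => ∃ a b : Bool, u i = some a ∧ v i = some b ∧ a ≠ b)).card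

/-- `v ∈ {0,1}^d` is covered by `u ∈ {0,1,*}^d` if they agree on all non-joker coordinates of `u`. -/
def covers {d : ℕ} (u : Fin d → Option Bool) (v : Fin d → Bool) : Prop :=
  ∀ i : Fin d, ∀ b : Bool, u i = some b → v i = b

/-- Number of joker (`*`) coordinates of `u`. -/
def jokers {d : ℕ} (u : Fin d → Option Bool) : ℕ :=
  (Finset.univ.filter (fun i => u i = none)).card

/-- Hamming weight of a binary vector. -/
def weight {d : ℕ} (v : Fin d → Bool) : ℕ :=
  (Finset.univ.filter (fun i => v i = true)).card
open Finset
open scoped FinsetFamily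
namespace KleitmanAux
variable {α : Type*} [DecidableEq α]

/-- Hamming distance between finsets. -/
def Dist (s u : Finset α) : ℕ := #(s \ u) + #(u \ s)

lemma dist_comm (s u : Finset α) : Dist s u = Dist u s := by
  simp [Dist, add_comm]

lemma sdiff_insert_insert {a : α} {s u : Finset α} (hs : a ∉ s) :
    insert a s \ insert a u = s \ u := by
  ext x
  simp only [mem_sdiff, mem_insert]
  by_cases hxa : x = a
  · subst hxa; simp [hs]
  · simp [hxa]

lemma insert_sdiff' {a : α} {s u : Finset α} (hu : a ∉ u) :
    insert a s \ u = insert a (s \ u) := by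
  ext x
  simp only [mem_sdiff, mem_insert]
  by_cases hxa : x = a
  · subst hxa; simp [hu]
  · simp [hxa]

lemma sdiff_insert' {a : α} {s u : Finset α} (hu : a ∉ u) :
    u \ insert a s = u \ s := by
  ext x
  simp only [mem_sdiff, mem_insert]
  by_cases hxa : x = a
  · subst hxa; simp [hu]
  · simp [hxa]

lemma dist_insert_insert {a : α} {s u : Finset α} (hs : a ∉ s) (hu : a ∉ u) :
    Dist (insert a s) (insert a u) = Dist s u := by
  unfold Dist
  rw [sdiff_insert_insert hs, sdiff_insert_insert hu]

lemma dist_insert_left {a : α} {s u : Finset α} (hs : a ∉ s) (hu : a ∉ u) :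
    Dist (insert a s) u = Dist s u + 1 := by
  unfold Dist
  rw [insert_sdiff' hu, sdiff_insert' hu,
    card_insert_of_notMem (fun h => hs (mem_sdiff.1 h).1)]
  ring

lemma dist_erase_right {a : α} {s u : Finset α} (hs : a ∉ s) (hu : a ∈ u) :
    Dist s (u.erase a) + 1 = Dist s u := by
  have h := dist_insert_left (a := a) (s := u.erase a) (u := s) (notMem_erase _ _) hs
  rw [insert_erase hu] at h
  rw [dist_comm s u, dist_comm s (u.erase a), h]

/-- Down-compression does not increase pairwise distances. -/
lemma down_compression_dist_le {a : α} {A : Finset (Finset α)} {D : ℕ}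
    (hA : ∀ s ∈ A, ∀ u ∈ A, Dist s u ≤ D) :
    ∀ s ∈ 𝓓 a A, ∀ u ∈ 𝓓 a A, Dist s u ≤ D := by
  have key : ∀ s u, s ∉ A → insert a s ∈ A → (u ∈ A ∧ u.erase a ∈ A) → Dist s u ≤ D := by
    rintro s u hsA hsiA ⟨huA, hueA⟩
    have has : a ∉ s := fun h => hsA (by rwa [insert_eq_self.2 h] at hsiA)
    by_cases hau : a ∈ u
    · have := hA _ hsiA _ hueA
      have h1 : Dist (insert a s) (u.erase a) = Dist s (u.erase a) + 1 :=
        dist_insert_left has (notMem_erase _ _)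
      have h2 : Dist s (u.erase a) + 1 = Dist s u := dist_erase_right has hau
      omega
    · have := hA _ hsiA _ huA
      have h1 : Dist (insert a s) u = Dist s u + 1 := dist_insert_left has hau
      omega
  intro s hs u hu
  rw [Down.mem_compression] at hs hu
  rcases hs with ⟨hs1, hs2⟩ | ⟨hs1, hs2⟩ <;> rcases hu with ⟨hu1, hu2⟩ | ⟨hu1, hu2⟩
  · exact hA _ hs1 _ hu1
  · rw [dist_comm]; exact key _ _ hu1 hu2 ⟨hs1, hs2⟩
  · exact key _ _ hs1 hs2 ⟨hu1, hu2⟩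
  · have has : a ∉ s := fun h => hs1 (by rwa [insert_eq_self.2 h] at hs2)
    have hau : a ∉ u := fun h => hu1 (by rwa [insert_eq_self.2 h] at hu2)
    have := hA _ hs2 _ hu2
    rwa [dist_insert_insert has hau] at this

/-- Down-compression preserves being closed under `erase b`. -/
lemma down_compression_erase_closed {a b : α} {A : Finset (Finset α)}
    (hA : ∀ s ∈ A, s.erase b ∈ A) :
    ∀ s ∈ 𝓓 a A, s.erase b ∈ 𝓓 a A := by
  intro s hs
  rw [Down.mem_compression] at hs
  rcases hs with ⟨hs1, hs2⟩ | ⟨hs1, hs2⟩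
  · rw [Down.mem_compression]
    left
    exact ⟨hA _ hs1, by rw [erase_right_comm]; exact hA _ hs2⟩
  · have has : a ∉ s := fun h => hs1 (by rwa [insert_eq_self.2 h] at hs2)
    rcases eq_or_ne b a with rfl | hba
    · rw [erase_eq_of_notMem has, Down.mem_compression]
      right; exact ⟨hs1, hs2⟩
    · have hw : insert a (s.erase b) ∈ A := by
        rw [← erase_insert_of_ne (Ne.symm hba)]
        exact hA _ hs2
      by_cases hsb : s.erase b ∈ A
      · rw [Down.mem_compression]
        left
        refine ⟨hsb, ?_⟩
        rwa [erase_eq_of_notMem (fun h => has (mem_of_mem_erase h))]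
      · rw [Down.mem_compression]
        right; exact ⟨hsb, hw⟩


lemma exists_downset_aux {D : ℕ} (L : List α) (A : Finset (Finset α))
    (hA : ∀ s ∈ A, ∀ u ∈ A, Dist s u ≤ D) :
    ∃ B : Finset (Finset α), #B = #A ∧ (∀ s ∈ B, ∀ u ∈ B, Dist s u ≤ D) ∧
      (∀ b ∈ L, ∀ s ∈ B, s.erase b ∈ B) := by
  induction L with
  | nil => exact ⟨A, rfl, hA, by simp⟩
  | cons a L ih =>
      obtain ⟨B, hcard, hdist, hcl⟩ := ih
      refine ⟨𝓓 a B, by rw [Down.card_compression, hcard], down_compression_dist_le hdist, ?_⟩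
      intro b hb s hs
      rcases List.mem_cons.1 hb with rfl | hb
      · exact Down.erase_mem_compression_of_mem_compression hs
      · exact down_compression_erase_closed (fun s hs => hcl b hb s hs) s hs

lemma lower_of_erase_closed {B : Finset (Finset α)} (hB : ∀ b, ∀ s ∈ B, s.erase b ∈ B) :
    ∀ s ∈ B, ∀ u ⊆ s, u ∈ B := by
  suffices h : ∀ k s u, s ∈ B → u ⊆ s → #(s \ u) = k → u ∈ B by
    intro s hs u hu; exact h _ s u hs hu rfl
  intro k
  induction k with
  | zero =>
      intro s u hs hu hk
      rw [card_eq_zero, sdiff_eq_empty_iff_subset] at hk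
      exact (subset_antisymm hu hk) ▸ hs
  | succ k ih =>
      intro s u hs hu hk
      have hne : (s \ u).Nonempty := by
        rw [← card_pos, hk]; omega
      obtain ⟨x, hx⟩ := hne
      rw [mem_sdiff] at hx
      refine ih (s.erase x) u (hB x s hs) ?_ ?_
      · intro y hy
        exact mem_erase.2 ⟨fun h => hx.2 (h ▸ hy), hu hy⟩
      · rw [erase_sdiff_comm, card_erase_of_mem (mem_sdiff.2 hx), hk]
        rfl

/-- From any family of diameter ≤ D, get a downset of the same size and diameter ≤ D. -/
lemma exists_downset [Fintype α] {D : ℕ} (A : Finset (Finset α))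
    (hA : ∀ s ∈ A, ∀ u ∈ A, Dist s u ≤ D) :
    ∃ B : Finset (Finset α), #B = #A ∧ (∀ s ∈ B, ∀ u ∈ B, Dist s u ≤ D) ∧
      (∀ s ∈ B, ∀ u ⊆ s, u ∈ B) := by
  obtain ⟨B, h1, h2, h3⟩ := exists_downset_aux (Finset.univ.toList) A hA
  exact ⟨B, h1, h2, lower_of_erase_closed (fun b s hs => h3 b (by simp) s hs)⟩


variable {α : Type*} [DecidableEq α]

lemma choose_mono_part {n : ℕ} : ∀ b, 2 * b ≤ n → ∀ a, a ≤ b → n.choose a ≤ n.choose b := by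
  intro b
  induction b with
  | zero =>
      intro _ a ha
      interval_cases a
      exact le_refl _
  | succ b ih =>
      intro hb a ha
      rcases eq_or_lt_of_le ha with rfl | ha
      · exact le_refl _
      · have h1 : n.choose a ≤ n.choose b := ih (by omega) a (by omega)
        have h2 : n.choose b ≤ n.choose (b + 1) := by
          apply Nat.choose_le_succ_of_lt_half_left
          have : b + 1 ≤ n / 2 := Nat.le_div_iff_mul_le (by norm_num) |>.2 (by omega)
          omega
        exact h1.trans h2

lemma choose_le_choose_of_le {n a b : ℕ} (hab : a ≤ b) (hbn : b ≤ n - a) (han : a ≤ n) :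
    n.choose a ≤ n.choose b := by
  rcases le_or_gt (2 * b) n with h | h
  · exact choose_mono_part b h a hab
  · have hbn' : b ≤ n := by omega
    rw [← Nat.choose_symm hbn']
    exact choose_mono_part (n - b) (by omega) a (by omega)

lemma shadow_subset_ground {G : Finset α} {H : Finset (Finset α)}
    (hsub : ∀ s ∈ H, s ⊆ G) : ∀ s ∈ ∂ H, s ⊆ G := by
  intro s hs
  obtain ⟨u, hu, hsu⟩ := exists_subset_of_mem_shadow hs
  exact hsu.trans (hsub u hu)

/-- Relative local LYM (counting form). -/
lemma rel_local_lym {G : Finset α} {H : Finset (Finset α)} {r : ℕ} (hr : 1 ≤ r)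
    (hsub : ∀ s ∈ H, s ⊆ G) (hsz : ∀ s ∈ H, #s = r) :
    #H * r ≤ #(∂ H) * (#G - r + 1) := by
  rcases H.eq_empty_or_nonempty with rfl | ⟨s0, hs0⟩
  · simp
  have hrG : r ≤ #G := (hsz s0 hs0) ▸ card_le_card (hsub s0 hs0)
  classical
  refine card_mul_le_card_mul' (fun x y => x ⊆ y) ?_ ?_
  · -- ∀ b ∈ H, r ≤ #(bipartiteBelow (⊆) (∂ H) b)
    intro b hb
    rw [← hsz b hb, ← card_image_of_injOn b.erase_injOn]
    refine card_le_card ?_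
    simp_rw [image_subset_iff, mem_bipartiteBelow]
    exact fun a ha => ⟨erase_mem_shadow hb ha, erase_subset _ _⟩
  · -- ∀ a ∈ ∂ H, #(bipartiteAbove (⊆) H a) ≤ #G - r + 1
    intro a ha
    have haG : a ⊆ G := shadow_subset_ground hsub a ha
    have hacard : #a = r - 1 := (Set.Sized.shadow (fun s hs => hsz s hs)) ha
    have hsub2 : bipartiteAbove (fun x y => x ⊆ y) H a ⊆ (G \ a).image (fun x => insert x a) := by
      intro y hy
      rw [mem_bipartiteAbove] at hy
      obtain ⟨hyH, hay⟩ := hy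
      have h1 : #(y \ a) = 1 := by
        rw [card_sdiff_of_subset hay, hsz y hyH, hacard]; omega
      obtain ⟨x, hx⟩ := card_eq_one.1 h1
      have hxy : x ∈ y \ a := hx ▸ mem_singleton_self x
      rw [mem_sdiff] at hxy
      refine mem_image.2 ⟨x, mem_sdiff.2 ⟨hsub y hyH hxy.1, hxy.2⟩, ?_⟩
      -- insert x a = y
      apply Finset.Subset.antisymm
      · exact insert_subset hxy.1 hay
      · intro z hz
        by_cases hza : z ∈ a
        · exact mem_insert_of_mem hza
        · have : z ∈ y \ a := mem_sdiff.2 ⟨hz, hza⟩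
          rw [hx, mem_singleton] at this
          exact this ▸ mem_insert_self _ _
    calc #(bipartiteAbove (fun x y => x ⊆ y) H a) ≤ #((G \ a).image (fun x => insert x a)) :=
          card_le_card hsub2
      _ ≤ #(G \ a) := card_image_le
      _ = #G - r + 1 := by rw [card_sdiff_of_subset haG, hacard]; omega

/-- Iterated relative local LYM, product form. -/
lemma rel_lym_iterate {G : Finset α} :
    ∀ (k m : ℕ) (H : Finset (Finset α)), k ≤ m →
    (∀ s ∈ H, s ⊆ G) → (∀ s ∈ H, #s = m) →
    #H * (#G).choose (m - k) ≤ #(∂^[k] H) * (#G).choose m := by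
  intro k
  induction k with
  | zero => intro m H _ _ _; simp
  | succ k ih =>
      intro m H hkm hsub hsz
      rcases H.eq_empty_or_nonempty with rfl | ⟨s0, hs0⟩
      · simp
      have hmG : m ≤ #G := (hsz s0 hs0) ▸ card_le_card (hsub s0 hs0)
      have hm1 : 1 ≤ m := by omega
      have hstep : #H * m ≤ #(∂ H) * (#G - m + 1) := rel_local_lym hm1 hsub hsz
      have hshsub : ∀ s ∈ ∂ H, s ⊆ G := shadow_subset_ground hsub
      have hshsz : ∀ s ∈ ∂ H, #s = m - 1 := Set.Sized.shadow (fun s hs => hsz s hs)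
      have hIH := ih (m - 1) (∂ H) (by omega) hshsub hshsz
      have hlevel : m - 1 - k = m - (k + 1) := by omega
      rw [hlevel] at hIH
      have hiter : ∂^[k] (∂ H) = ∂^[k + 1] H := by
        rw [← Function.iterate_succ_apply]
      rw [hiter] at hIH
      have hid : (#G).choose (m - 1) * (#G - m + 1) = (#G).choose m * m := by
        have := Nat.choose_succ_right_eq #G (m - 1)
        have hm : m - 1 + 1 = m := by omega
        rw [hm] at this
        rw [this]
        congr 1
        omega
      -- combine
      have h1 : #H * m * (#G).choose (m - (k+1)) ≤ #(∂ H) * (#G - m + 1) * (#G).choose (m - (k+1)) :=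
        Nat.mul_le_mul_right _ hstep
      have h2 : #(∂ H) * (#G).choose (m - (k+1)) * (#G - m + 1) ≤
          #(∂^[k+1] H) * (#G).choose (m - 1) * (#G - m + 1) := by
        exact Nat.mul_le_mul_right _ hIH
      have h3 : #(∂^[k+1] H) * (#G).choose (m - 1) * (#G - m + 1)
          = #(∂^[k+1] H) * (#G).choose m * m := by
        rw [mul_assoc, mul_assoc, hid]
      have h4 : #H * m * (#G).choose (m - (k+1)) ≤ #(∂^[k+1] H) * (#G).choose m * m := by
        calc #H * m * (#G).choose (m - (k+1))
            ≤ #(∂ H) * (#G - m + 1) * (#G).choose (m - (k+1)) := h1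
          _ = #(∂ H) * (#G).choose (m - (k+1)) * (#G - m + 1) := by ring
          _ ≤ #(∂^[k+1] H) * (#G).choose (m - 1) * (#G - m + 1) := h2
          _ = #(∂^[k+1] H) * (#G).choose m * m := h3
      have h5 : #H * (#G).choose (m - (k+1)) * m ≤ #(∂^[k+1] H) * (#G).choose m * m := by
        calc #H * (#G).choose (m - (k+1)) * m = #H * m * (#G).choose (m - (k+1)) := by ring
          _ ≤ #(∂^[k+1] H) * (#G).choose m * m := h4
      exact Nat.le_of_mul_le_mul_right h5 (by omega)

/-- In the "large level" regime, iterated shadows don't shrink. -/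
lemma card_le_card_shadow_iterate {G : Finset α} {H : Finset (Finset α)} {m k : ℕ}
    (hk : k ≤ m) (hsmall : #G + k ≤ 2 * m)
    (hsub : ∀ s ∈ H, s ⊆ G) (hsz : ∀ s ∈ H, #s = m) :
    #H ≤ #(∂^[k] H) := by
  rcases H.eq_empty_or_nonempty with rfl | ⟨s0, hs0⟩
  · simp
  have hmG : m ≤ #G := (hsz s0 hs0) ▸ card_le_card (hsub s0 hs0)
  have h1 := rel_lym_iterate k m H hk hsub hsz
  have h2 : (#G).choose m ≤ (#G).choose (m - k) := by
    rw [← Nat.choose_symm hmG]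
    exact choose_le_choose_of_le (by omega) (by omega) (by omega)
  have h3 : #H * (#G).choose (m - k) ≤ #(∂^[k] H) * (#G).choose (m - k) :=
    h1.trans (Nat.mul_le_mul_left _ h2)
  have hpos : 0 < (#G).choose (m - k) := Nat.choose_pos (by omega)
  exact Nat.le_of_mul_le_mul_right h3 hpos


variable {α : Type*} [DecidableEq α]

lemma compress_singleton {i j : α} (hij : i ≠ j) (s : Finset α) :
    UV.compress {i} {j} s = if i ∉ s ∧ j ∈ s then insert i (s.erase j) else s := by
  unfold UV.compress
  by_cases h : i ∉ s ∧ j ∈ s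
  · rw [if_pos, if_pos h]
    · ext x
      simp only [sup_eq_union, sdiff_singleton_eq_erase, mem_erase, mem_union, mem_insert,
        mem_singleton]
      by_cases hxi : x = i
      · subst hxi; simp [hij]
      · by_cases hxj : x = j
        · subst hxj; simp [Ne.symm hij, hxi]
        · simp [hxi, hxj]
    · exact ⟨disjoint_singleton_left.2 h.1, singleton_subset_iff.2 h.2⟩
  · rw [if_neg, if_neg h]
    rw [not_and_or] at h
    rintro ⟨h1, h2⟩
    rcases h with h | h
    · exact h (disjoint_singleton_left.1 h1)
    · exact h (singleton_subset_iff.1 h2)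

lemma compress_moved {i j : α} (hij : i ≠ j) {s : Finset α}
    (h : i ∉ s ∧ j ∈ s) : UV.compress {i} {j} s = insert i (s.erase j) := by
  rw [compress_singleton hij, if_pos h]

lemma compress_cond_of_ne {i j : α} (hij : i ≠ j) {s : Finset α}
    (h : UV.compress {i} {j} s ≠ s) : i ∉ s ∧ j ∈ s := by
  by_contra hc
  exact h (by rw [compress_singleton hij, if_neg hc])

/-- Members of the compressed family are subsets of the ground set. -/
lemma compression_subset_ground {i j : α} (hij : i ≠ j) {G : Finset α} (hiG : i ∈ G)
    {H : Finset (Finset α)} (hsub : ∀ s ∈ H, s ⊆ G) :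
    ∀ s ∈ 𝓒 {i} {j} H, s ⊆ G := by
  intro s hs
  rw [UV.mem_compression] at hs
  rcases hs with ⟨hs, -⟩ | ⟨-, b, hb, rfl⟩
  · exact hsub s hs
  · rw [compress_singleton hij]
    split_ifs with h
    · exact insert_subset hiG ((erase_subset _ _).trans (hsub b hb))
    · exact hsub b hb

lemma inter_moved_moved {i j : α} {b c : Finset α}
    (hb : i ∉ b ∧ j ∈ b) (hc : i ∉ c ∧ j ∈ c) :
    #(insert i (b.erase j) ∩ insert i (c.erase j)) = #(b ∩ c) := by
  have h1 : insert i (b.erase j) ∩ insert i (c.erase j) = insert i ((b ∩ c).erase j) := by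
    ext x
    simp only [mem_inter, mem_insert, mem_erase]
    by_cases hxi : x = i
    · subst hxi; simp
    · by_cases hxj : x = j
      · subst hxj; simp [hxi]
      · simp [hxi, hxj, and_assoc] <;> tauto
  rw [h1, card_insert_of_notMem (fun h => hb.1 (mem_inter.1 (mem_of_mem_erase h)).1),
    card_erase_of_mem (mem_inter.2 ⟨hb.2, hc.2⟩)]
  have : 0 < #(b ∩ c) := card_pos.2 ⟨j, mem_inter.2 ⟨hb.2, hc.2⟩⟩
  omega

/-- One-sided case: `b` moved, `u` kept. -/
lemma inter_moved_kept {i j : α} (hij : i ≠ j) {H : Finset (Finset α)} {t : ℕ}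
    (hH : ∀ s ∈ H, ∀ u ∈ H, t ≤ #(s ∩ u))
    {b u : Finset α} (hbH : b ∈ H) (hb : i ∉ b ∧ j ∈ b)
    (huH : u ∈ H) (hCu : UV.compress {i} {j} u ∈ H) :
    t ≤ #(insert i (b.erase j) ∩ u) := by
  by_cases hju : j ∈ u
  · by_cases hiu : i ∈ u
    · -- b ∩ u minus j plus i
      have hsub : insert i ((b ∩ u).erase j) ⊆ insert i (b.erase j) ∩ u := by
        intro x hx
        rcases mem_insert.1 hx with rfl | hx
        · exact mem_inter.2 ⟨mem_insert_self _ _, hiu⟩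
        · rw [mem_erase, mem_inter] at hx
          exact mem_inter.2 ⟨mem_insert_of_mem (mem_erase.2 ⟨hx.1, hx.2.1⟩), hx.2.2⟩
      have h1 : #(insert i ((b ∩ u).erase j)) = #((b ∩ u).erase j) + 1 :=
        card_insert_of_notMem (fun h => hb.1 (mem_inter.1 (mem_of_mem_erase h)).1)
      have h2 : #((b ∩ u).erase j) = #(b ∩ u) - 1 :=
        card_erase_of_mem (mem_inter.2 ⟨hb.2, hju⟩)
      have h3 : 0 < #(b ∩ u) := card_pos.2 ⟨j, mem_inter.2 ⟨hb.2, hju⟩⟩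
      have h4 := hH b hbH u huH
      have h5 := card_le_card hsub
      omega
    · -- interesting case: u also movable; C u ∈ H
      rw [compress_moved hij ⟨hiu, hju⟩] at hCu
      have heq : insert i (b.erase j) ∩ u = b ∩ insert i (u.erase j) := by
        ext x
        simp only [mem_inter, mem_insert, mem_erase]
        by_cases hxi : x = i
        · subst hxi; simp [hb.1, hiu]
        · by_cases hxj : x = j
          · subst hxj; simp [hxi, Ne.symm hij]
          · simp [hxi, hxj] <;> tauto
      rw [heq]
      exact hH b hbH _ hCu
  · -- j ∉ u : b ∩ u ⊆ (C b) ∩ u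
    have hsub : b ∩ u ⊆ insert i (b.erase j) ∩ u := by
      intro x hx
      rw [mem_inter] at hx
      have hxj : x ≠ j := fun h => hju (h ▸ hx.2)
      exact mem_inter.2 ⟨mem_insert_of_mem (mem_erase.2 ⟨hxj, hx.1⟩), hx.2⟩
    exact (hH b hbH u huH).trans (card_le_card hsub)

/-- Singleton UV-compression preserves `t`-intersecting. -/
lemma inter_compression {i j : α} (hij : i ≠ j) {H : Finset (Finset α)} {t : ℕ}
    (hH : ∀ s ∈ H, ∀ u ∈ H, t ≤ #(s ∩ u)) :
    ∀ s ∈ 𝓒 {i} {j} H, ∀ u ∈ 𝓒 {i} {j} H, t ≤ #(s ∩ u) := by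
  intro s hs u hu
  rw [UV.mem_compression] at hs hu
  rcases hs with ⟨hs1, hs2⟩ | ⟨hs1, b, hbH, rfl⟩ <;>
    rcases hu with ⟨hu1, hu2⟩ | ⟨hu1, c, hcH, rfl⟩
  · exact hH _ hs1 _ hu1
  · have hc : i ∉ c ∧ j ∈ c := compress_cond_of_ne hij (fun h => hu1 (by rwa [h]))
    rw [compress_moved hij hc, inter_comm]
    exact inter_moved_kept hij hH hcH hc hs1 hs2
  · have hb : i ∉ b ∧ j ∈ b := compress_cond_of_ne hij (fun h => hs1 (by rwa [h]))
    rw [compress_moved hij hb]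
    exact inter_moved_kept hij hH hbH hb hu1 hu2
  · have hb : i ∉ b ∧ j ∈ b := compress_cond_of_ne hij (fun h => hs1 (by rwa [h]))
    have hc : i ∉ c ∧ j ∈ c := compress_cond_of_ne hij (fun h => hu1 (by rwa [h]))
    rw [compress_moved hij hb, compress_moved hij hc, inter_moved_moved hb hc]
    exact hH _ hbH _ hcH

/-- Iterated shadow cardinality under singleton compression. -/
lemma shadow_iterate_compression_subset {i j : α} :
    ∀ (k : ℕ) (H : Finset (Finset α)), ∂^[k] (𝓒 {i} {j} H) ⊆ 𝓒 {i} {j} (∂^[k] H) := by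
  have haux : ∀ (H : Finset (Finset α)), ∂ (𝓒 {i} {j} H) ⊆ 𝓒 {i} {j} (∂ H) := by
    intro H
    refine UV.shadow_compression_subset_compression_shadow _ _ ?_
    intro x hx
    refine ⟨j, mem_singleton_self j, ?_⟩
    rw [mem_singleton] at hx
    subst hx
    rw [erase_singleton, erase_singleton]
    exact UV.isCompressed_self _ _
  intro k
  induction k with
  | zero => intro H; exact Subset.refl _
  | succ k ih =>
      intro H
      rw [Function.iterate_succ_apply, Function.iterate_succ_apply]
      exact (Monotone.iterate shadow_monotone k (haux H)).trans (ih (∂ H))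

lemma card_shadow_iterate_compression_le {i j : α} (k : ℕ) (H : Finset (Finset α)) :
    #(∂^[k] (𝓒 {i} {j} H)) ≤ #(∂^[k] H) := by
  calc #(∂^[k] (𝓒 {i} {j} H)) ≤ #(𝓒 {i} {j} (∂^[k] H)) :=
        card_le_card (shadow_iterate_compression_subset k H)
    _ = #(∂^[k] H) := UV.card_compression _ _ _


variable {d : ℕ}




/-- Weight of a family, for termination of shifting. -/
def famW (H : Finset (Finset (Fin d))) : ℕ := ∑ s ∈ H, ∑ x ∈ s, (x : ℕ)

lemma compression_eq_self_of {i j : Fin d} {H : Finset (Finset (Fin d))}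
    (h : ∀ s ∈ H, UV.compress {i} {j} s ∈ H) : 𝓒 {i} {j} H = H := by
  ext x
  rw [UV.mem_compression]
  constructor
  · rintro (⟨hx, -⟩ | ⟨hx, b, hb, rfl⟩)
    · exact hx
    · exact absurd (h b hb) hx
  · intro hx
    exact Or.inl ⟨hx, h x hx⟩

lemma famW_compression_lt {i j : Fin d} (hij : i < j) {H : Finset (Finset (Fin d))}
    (hne : 𝓒 {i} {j} H ≠ H) : famW (𝓒 {i} {j} H) < famW H := by
  have hijne : i ≠ j := ne_of_lt hij
  -- split H into kept and moved parts
  have hsplit : famW H = ∑ s ∈ H.filter (fun s => UV.compress {i} {j} s ∈ H), (∑ x ∈ s, (x:ℕ))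
      + ∑ s ∈ H.filter (fun s => UV.compress {i} {j} s ∉ H), (∑ x ∈ s, (x:ℕ)) :=
    (sum_filter_add_sum_filter_not H _ _).symm
  have himg : (H.image (UV.compress {i} {j})).filter (fun x => x ∉ H) = (H.filter (fun s => UV.compress {i} {j} s ∉ H)).image (UV.compress {i} {j}) := by
    ext x
    simp only [mem_filter, mem_image]
    constructor
    · rintro ⟨⟨b, hb, rfl⟩, hx⟩
      exact ⟨b, ⟨hb, hx⟩, rfl⟩
    · rintro ⟨b, ⟨hb, hbn⟩, rfl⟩
      exact ⟨⟨b, hb, rfl⟩, hbn⟩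
  have hcomp : 𝓒 {i} {j} H =
      (H.filter (fun s => UV.compress {i} {j} s ∈ H)) ∪ (H.filter (fun s => UV.compress {i} {j} s ∉ H)).image (UV.compress {i} {j}) := by
    rw [UV.compression, himg]
  have hdisj : Disjoint (H.filter (fun s => UV.compress {i} {j} s ∈ H)) ((H.filter (fun s => UV.compress {i} {j} s ∉ H)).image (UV.compress {i} {j})) := by
    rw [disjoint_left]
    rintro a ha hb
    rw [mem_filter] at ha
    rw [← himg, mem_filter] at hb
    exact hb.2 ha.1
  have hWc : famW (𝓒 {i} {j} H) = ∑ s ∈ H.filter (fun s => UV.compress {i} {j} s ∈ H), (∑ x ∈ s, (x:ℕ))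
      + ∑ s ∈ (H.filter (fun s => UV.compress {i} {j} s ∉ H)).image (UV.compress {i} {j}), (∑ x ∈ s, (x:ℕ)) := by
    rw [hcomp]
    exact sum_union hdisj
  have hinj : Set.InjOn (UV.compress {i} {j}) ((H.filter (fun s => UV.compress {i} {j} s ∉ H) : Finset (Finset (Fin d))) : Set (Finset (Fin d))) := UV.compress_injOn (s := H)
  have himgsum : ∑ s ∈ (H.filter (fun s => UV.compress {i} {j} s ∉ H)).image (UV.compress {i} {j}), (∑ x ∈ s, (x:ℕ))
      = ∑ s ∈ H.filter (fun s => UV.compress {i} {j} s ∉ H), (∑ x ∈ UV.compress {i} {j} s, (x:ℕ)) := sum_image hinj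
  -- the moved filter is nonempty
  have hne2 : (H.filter (fun s => UV.compress {i} {j} s ∉ H)).Nonempty := by
    by_contra hcon
    rw [not_nonempty_iff_eq_empty, filter_eq_empty_iff] at hcon
    push_neg at hcon
    exact hne (compression_eq_self_of hcon)
  -- pointwise strict decrease on moved part
  have hpt : ∀ s ∈ H.filter (fun s => UV.compress {i} {j} s ∉ H), (∑ x ∈ UV.compress {i} {j} s, (x:ℕ)) < ∑ x ∈ s, (x:ℕ) := by
    intro s hs
    rw [mem_filter] at hs
    have hcond : i ∉ s ∧ j ∈ s := compress_cond_of_ne hijne (fun h => hs.2 (by rw [h]; exact hs.1))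
    rw [compress_moved hijne hcond]
    have h1 : ∑ x ∈ insert i (s.erase j), (x:ℕ) = (i:ℕ) + ∑ x ∈ s.erase j, (x:ℕ) :=
      sum_insert (fun h => hcond.1 (mem_of_mem_erase h))
    have h2 : ∑ x ∈ s.erase j, (x:ℕ) + (j:ℕ) = ∑ x ∈ s, (x:ℕ) := by
      rw [sum_erase_add s _ hcond.2]
    have hij' : (i:ℕ) < (j:ℕ) := hij
    omega
  have := sum_lt_sum_of_nonempty hne2 hpt
  omega

/-- `H` is fully shifted on `G`. -/
def ShiftedOn (G : Finset (Fin d)) (H : Finset (Finset (Fin d))) : Prop :=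
  ∀ i j : Fin d, i < j → i ∈ G → j ∈ G → UV.IsCompressed {i} {j} H

lemma exists_shifted (G : Finset (Fin d)) (m t k : ℕ) :
    ∀ (N : ℕ) (H : Finset (Finset (Fin d))), famW H ≤ N →
    (∀ s ∈ H, s ⊆ G) → (∀ s ∈ H, #s = m) → (∀ s ∈ H, ∀ u ∈ H, t ≤ #(s ∩ u)) →
    ∃ H' : Finset (Finset (Fin d)),
      (∀ s ∈ H', s ⊆ G) ∧ (∀ s ∈ H', #s = m) ∧ (∀ s ∈ H', ∀ u ∈ H', t ≤ #(s ∩ u)) ∧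
      #H' = #H ∧ #(∂^[k] H') ≤ #(∂^[k] H) ∧ ShiftedOn G H' := by
  intro N
  induction N with
  | zero =>
      intro H hW hsub hsz hint
      by_cases hsh : ShiftedOn G H
      · exact ⟨H, hsub, hsz, hint, rfl, le_refl _, hsh⟩
      · exfalso
        unfold ShiftedOn at hsh
        push_neg at hsh
        obtain ⟨i, j, hij, hiG, hjG, hnc⟩ := hsh
        have := famW_compression_lt hij hnc
        omega
  | succ N ih =>
      intro H hW hsub hsz hint
      by_cases hsh : ShiftedOn G H
      · exact ⟨H, hsub, hsz, hint, rfl, le_refl _, hsh⟩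
      · unfold ShiftedOn at hsh
        push_neg at hsh
        obtain ⟨i, j, hij, hiG, hjG, hnc⟩ := hsh
        have hlt := famW_compression_lt hij hnc
        have hijne : i ≠ j := ne_of_lt hij
        obtain ⟨H', h1, h2, h3, h4, h5, h6⟩ := ih (𝓒 {i} {j} H) (by omega)
          (compression_subset_ground hijne hiG hsub)
          (fun s hs => Set.Sized.uvCompression (by simp) (fun s hs => hsz s hs) hs)
          (inter_compression hijne hint)
        refine ⟨H', h1, h2, h3, ?_, ?_, h6⟩
        · rw [h4, UV.card_compression]
        · exact h5.trans (card_shadow_iterate_compression_le k H)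

variable {d : ℕ} {α : Type*} [DecidableEq α]

lemma sdiff_insert_insert' {a : α} {s u : Finset α} (hs : a ∉ s) :
    insert a s \ insert a u = s \ u := by
  ext x
  simp only [mem_sdiff, mem_insert]
  by_cases hxa : x = a
  · subst hxa; simp [hs]
  · simp [hxa]

lemma insert_inter_insert {a : α} {s u : Finset α} (hs : a ∉ s) :
    insert a s ∩ insert a u = insert a (s ∩ u) := by
  ext x
  simp only [mem_inter, mem_insert]
  by_cases hxa : x = a
  · subst hxa; simp
  · simp [hxa] <;> tauto

/-- Katona's intersecting-shadow theorem (non-strict form), relative to a ground set. -/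
theorem katona (d : ℕ) : ∀ (g : ℕ) (G : Finset (Fin d)) (m t : ℕ) (H : Finset (Finset (Fin d))),
    #G = g → 1 ≤ t → t ≤ m →
    (∀ s ∈ H, s ⊆ G) → (∀ s ∈ H, #s = m) → (∀ s ∈ H, ∀ u ∈ H, t ≤ #(s ∩ u)) →
    #H ≤ #(∂^[t] H) := by
  intro g
  induction g using Nat.strong_induction_on with
  | _ g IH =>
  intro G m t H hG ht htm hsub hsz hint
  rcases H.eq_empty_or_nonempty with rfl | ⟨s0, hs0⟩
  · simp
  rcases eq_or_lt_of_le htm with rfl | htm'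
  · -- t = m : H is a single set
    have hone : ∀ s ∈ H, s = s0 := by
      intro s hs
      have h1 := hint s hs s0 hs0
      have h2 : s ∩ s0 ⊆ s := inter_subset_left
      have h3 : s ∩ s0 = s := eq_of_subset_of_card_le h2 (by rw [hsz s hs]; exact h1)
      have h4 : s ∩ s0 = s0 := eq_of_subset_of_card_le inter_subset_right
        (by rw [hsz s0 hs0]; exact h1)
      rw [← h3, h4]
    have hHs : H = {s0} := by
      apply Finset.Subset.antisymm
      · intro s hs; rw [mem_singleton]; exact hone s hs
      · intro s hs; rw [mem_singleton] at hs; subst hs; exact hs0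
    have hmem : (∅ : Finset (Fin d)) ∈ ∂^[t] H := by
      rw [mem_shadow_iterate_iff_exists_sdiff]
      exact ⟨s0, hs0, empty_subset _, by rw [sdiff_empty, hsz s0 hs0]⟩
    rw [hHs, card_singleton]
    exact card_pos.2 ⟨∅, by rwa [hHs] at hmem⟩
  by_cases hsmall : g + t ≤ 2 * m
  · exact card_le_card_shadow_iterate (le_of_lt htm') (by rw [hG]; omega) hsub hsz
  -- big ground set: shift and split
  obtain ⟨H', h1, h2, h3, h4, h5, h6⟩ :=
    exists_shifted G m t t (famW H) H le_rfl hsub hsz hint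
  have hfin : #H' ≤ #(∂^[t] H') → #H ≤ #(∂^[t] H) := by
    intro h
    rw [← h4]
    exact h.trans h5
  apply hfin
  rcases H'.eq_empty_or_nonempty with hE | ⟨s0', hs0'⟩
  · simp [hE]
  have hs0G : s0' ⊆ G := h1 s0' hs0'
  have hs0m : #s0' = m := h2 s0' hs0'
  have hGne : G.Nonempty := by
    have : s0'.Nonempty := card_pos.1 (by omega)
    obtain ⟨x, hx⟩ := this
    exact ⟨x, hs0G hx⟩
  have hgpos : 1 ≤ g := by rw [← hG]; exact card_pos.2 hGne
  have hmg : m ≤ g := by rw [← hG, ← hs0m]; exact card_le_card hs0G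
  set a := G.max' hGne with ha
  set G' := G.erase a with hG'def
  have haG : a ∈ G := G.max'_mem hGne
  have hG'card : #G' = g - 1 := by rw [hG'def, card_erase_of_mem haG, hG]
  set H0 := H'.nonMemberSubfamily a with hH0def
  set H1 := H'.memberSubfamily a with hH1def
  have hH0mem : ∀ s, s ∈ H0 ↔ s ∈ H' ∧ a ∉ s := fun s => mem_nonMemberSubfamily
  have hH1mem : ∀ s, s ∈ H1 ↔ insert a s ∈ H' ∧ a ∉ s := fun s => mem_memberSubfamily
  -- H0 properties
  have hH0sub : ∀ s ∈ H0, s ⊆ G' := by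
    intro s hs
    rw [hH0mem] at hs
    exact subset_erase.2 ⟨h1 s hs.1, hs.2⟩
  have hH0sz : ∀ s ∈ H0, #s = m := fun s hs => h2 s ((hH0mem s).1 hs).1
  have hH0int : ∀ s ∈ H0, ∀ u ∈ H0, t ≤ #(s ∩ u) := fun s hs u hu =>
    h3 s ((hH0mem s).1 hs).1 u ((hH0mem u).1 hu).1
  -- H1 properties
  have hH1sub : ∀ s ∈ H1, s ⊆ G' := by
    intro s hs
    rw [hH1mem] at hs
    refine subset_erase.2 ⟨?_, hs.2⟩
    exact (subset_insert a s).trans (h1 _ hs.1)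
  have hH1sz : ∀ s ∈ H1, #s = m - 1 := by
    intro s hs
    rw [hH1mem] at hs
    have := h2 _ hs.1
    rw [card_insert_of_notMem hs.2] at this
    omega
  have hH1int : ∀ s ∈ H1, ∀ u ∈ H1, t ≤ #(s ∩ u) := by
    intro s hs u hu
    rw [hH1mem] at hs hu
    have hbase := h3 _ hs.1 _ hu.1
    rw [insert_inter_insert hs.2, card_insert_of_notMem
      (fun h => hs.2 (mem_inter.1 h).1)] at hbase
    by_contra hcon
    push_neg at hcon
    have hcap : #(s ∩ u) = t - 1 := by omega
    -- find x ∈ G' outside s ∪ u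
    have hsu : s ∪ u ⊆ G' := union_subset (hH1sub s ((hH1mem s).2 hs)) (hH1sub u ((hH1mem u).2 hu))
    have hsucard : #(s ∪ u) = 2 * m - t - 1 := by
      have := card_union_add_card_inter s u
      have h1' := hH1sz s ((hH1mem s).2 hs)
      have h2' := hH1sz u ((hH1mem u).2 hu)
      omega
    have hex : (G' \ (s ∪ u)).Nonempty := by
      rw [← card_pos, card_sdiff_of_subset hsu, hG'card, hsucard]
      omega
    obtain ⟨x, hx⟩ := hex
    rw [mem_sdiff] at hx
    have hxG : x ∈ G := mem_of_mem_erase hx.1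
    have hxa : x ≠ a := ne_of_mem_erase hx.1
    have hxlt : x < a := lt_of_le_of_ne (G.le_max' x hxG) hxa
    have hcomp := h6 x a hxlt hxG haG
    -- compress (insert a s) into (insert x s) ∈ H'
    have hxs : x ∉ insert a s := by
      rw [mem_insert]
      push_neg
      exact ⟨hxa, fun h => hx.2 (mem_union_left _ h)⟩
    have hmv : UV.compress {x} {a} (insert a s) = insert x s := by
      rw [compress_moved (ne_of_lt hxlt) ⟨hxs, mem_insert_self a s⟩, erase_insert hs.2]
    have hins : insert x s ∈ H' := by
      have := UV.compress_mem_compression (s := H') (u := {x}) (v := {a}) hs.1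
      rwa [hmv, hcomp] at this
    have hfinal := h3 _ hins _ hu.1
    have heq : insert x s ∩ insert a u = s ∩ u := by
      ext y
      simp only [mem_inter, mem_insert]
      by_cases hya : y = a
      · subst hya
        simp [hs.2, Ne.symm hxa]
      · by_cases hyx : y = x
        · subst hyx
          have hns : y ∉ s := fun h => hx.2 (mem_union_left _ h)
          have hnu : y ∉ u := fun h => hx.2 (mem_union_right _ h)
          simp [hxa, hns, hnu]
        · simp [hya, hyx]
    rw [heq] at hfinal
    omega
  -- apply induction hypothesis
  have hg1 : g - 1 < g := by omega
  have hIH0 : #H0 ≤ #(∂^[t] H0) :=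
    IH (g - 1) hg1 G' m t H0 hG'card ht (le_of_lt htm') hH0sub hH0sz hH0int
  have hIH1 : #H1 ≤ #(∂^[t] H1) :=
    IH (g - 1) hg1 G' (m - 1) t H1 hG'card ht (by omega) hH1sub hH1sz hH1int
  -- combine
  have hnoa0 : ∀ D ∈ ∂^[t] H0, a ∉ D := by
    intro D hD
    rw [mem_shadow_iterate_iff_exists_sdiff] at hD
    obtain ⟨s, hs, hDs, -⟩ := hD
    exact fun h => ((hH0mem s).1 hs).2 (hDs h)
  have hnoa1 : ∀ D ∈ ∂^[t] H1, a ∉ D := by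
    intro D hD
    rw [mem_shadow_iterate_iff_exists_sdiff] at hD
    obtain ⟨s, hs, hDs, -⟩ := hD
    exact fun h => ((hH1mem s).1 hs).2 (hDs h)
  have hsubset : (∂^[t] H0) ∪ (∂^[t] H1).image (insert a) ⊆ ∂^[t] H' := by
    intro D hD
    rcases mem_union.1 hD with hD | hD
    · rw [mem_shadow_iterate_iff_exists_sdiff] at hD ⊢
      obtain ⟨s, hs, hDs, hc⟩ := hD
      exact ⟨s, ((hH0mem s).1 hs).1, hDs, hc⟩
    · obtain ⟨D', hD', rfl⟩ := mem_image.1 hD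
      rw [mem_shadow_iterate_iff_exists_sdiff] at hD' ⊢
      obtain ⟨s, hs, hDs, hc⟩ := hD'
      refine ⟨insert a s, ((hH1mem s).1 hs).1, insert_subset_insert a hDs, ?_⟩
      rw [sdiff_insert_insert' ((hH1mem s).1 hs).2, hc]
  have hdisj : Disjoint (∂^[t] H0) ((∂^[t] H1).image (insert a)) := by
    rw [disjoint_left]
    intro D hD hD2
    obtain ⟨D', hD', rfl⟩ := mem_image.1 hD2
    exact hnoa0 _ hD (mem_insert_self a D')
  have himgcard : #((∂^[t] H1).image (insert a)) = #(∂^[t] H1) := by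
    apply card_image_of_injOn
    intro D hD D2 hD2 heq
    have h1' : a ∉ D := hnoa1 D hD
    have h2' : a ∉ D2 := hnoa1 D2 hD2
    have : (insert a D).erase a = (insert a D2).erase a := by rw [heq]
    rwa [erase_insert h1', erase_insert h2'] at this
  have hcards : #H' = #H1 + #H0 := (card_memberSubfamily_add_card_nonMemberSubfamily a H').symm
  have hunion : #(∂^[t] H0) + #(∂^[t] H1) ≤ #(∂^[t] H') := by
    rw [← himgcard, ← card_union_of_disjoint hdisj]
    exact card_le_card hsubset
  omega



/-- Per-level bound for a downset of diameter at most `2t`. -/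
lemma level_bound {d t l : ℕ} (hd : 2 * t < d) (hl1 : 1 ≤ l) (hlt : l ≤ t)
    {B : Finset (Finset (Fin d))}
    (hBdist : ∀ s ∈ B, ∀ u ∈ B, Dist s u ≤ 2 * t)
    (hBlow : ∀ s ∈ B, ∀ u ⊆ s, u ∈ B) :
    #(B.filter (fun x => #x = 2 * t + 1 - l)) + #(B.filter (fun x => #x = l)) ≤ d.choose l := by
  set s := 2 * t + 1 - l with hs
  have hs1 : t + 1 ≤ s := by omega
  have hs2 : s ≤ 2 * t := by omega
  set Bs := B.filter (fun x => #x = s) with hBs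
  set Bl := B.filter (fun x => #x = l) with hBl
  set H := Bs.image (fun x => xᶜ) with hH
  have hHcard : #H = #Bs := card_image_of_injective _ compl_injective
  have hHsz : ∀ x ∈ H, #x = d - s := by
    intro x hx
    obtain ⟨b, hb, rfl⟩ := mem_image.1 hx
    rw [card_compl, Fintype.card_fin]
    rw [hBs, mem_filter] at hb
    rw [hb.2]
  have hunion_le : ∀ b ∈ Bs, ∀ c ∈ Bs, #(b ∪ c) ≤ 2 * t := by
    intro b hb c hc
    rw [hBs, mem_filter] at hb hc
    have hbc : b \ c ∈ B := hBlow b hb.1 _ sdiff_subset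
    have hdist := hBdist _ hbc c hc.1
    have he1 : (b \ c) \ c = b \ c := by
      ext x; simp only [mem_sdiff]; tauto
    have he2 : c \ (b \ c) = c := by
      ext x; simp only [mem_sdiff]; tauto
    rw [Dist, he1, he2] at hdist
    have := card_sdiff_add_card_eq_card (@inter_subset_left _ _ b c)
    have hcu := card_union_add_card_inter b c
    have hcs : #(b \ c) + #c = #(b ∪ c) := card_sdiff_add_card b c
    omega
  have hHint : ∀ x ∈ H, ∀ y ∈ H, d - 2 * t - 1 ≤ #(x ∩ y) := by
    intro x hx y hy
    obtain ⟨b, hb, rfl⟩ := mem_image.1 hx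
    obtain ⟨c, hc, rfl⟩ := mem_image.1 hy
    have : bᶜ ∩ cᶜ = (b ∪ c)ᶜ := (compl_union b c).symm
    rw [this, card_compl, Fintype.card_fin]
    have := hunion_le b hb c hc
    omega
  have hK : #H ≤ #(∂^[d - 2 * t - 1] H) := by
    rcases Nat.eq_or_lt_of_le hd with heq | hlt2
    · have : d - 2 * t - 1 = 0 := by omega
      rw [this]
      exact le_refl _
    · refine katona d d univ (d - s) (d - 2 * t - 1) H ?_ (by omega) (by omega)
        (fun x _ => subset_univ x) hHsz hHint
      rw [card_univ, Fintype.card_fin]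
  have hsh : ∂^[d - 2 * t - 1] H ⊆ (powersetCard l univ).filter (fun x => x ∉ B) := by
    intro X hX
    rw [mem_shadow_iterate_iff_exists_sdiff] at hX
    obtain ⟨Y, hY, hXY, hYX⟩ := hX
    obtain ⟨b, hb, rfl⟩ := mem_image.1 hY
    rw [hBs, mem_filter] at hb
    have hYcard : #(bᶜ) = d - s := by rw [card_compl, Fintype.card_fin, hb.2]
    have hXcard : #X = l := by
      have h1 : #(bᶜ \ X) = #(bᶜ) - #X := card_sdiff_of_subset hXY
      have h2 : #X ≤ #(bᶜ) := card_le_card hXY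
      omega
    rw [mem_filter]
    refine ⟨mem_powersetCard_univ.2 hXcard, ?_⟩
    intro hXB
    -- X is disjoint from b
    have hdisj : ∀ x ∈ X, x ∉ b := by
      intro x hx hxb
      have := hXY hx
      rw [mem_compl] at this
      exact this hxb
    have hdist := hBdist X hXB b hb.1
    have he1 : X \ b = X := by
      ext x; simp only [mem_sdiff]
      exact ⟨fun h => h.1, fun h => ⟨h, hdisj x h⟩⟩
    have he2 : b \ X = b := by
      ext x; simp only [mem_sdiff]
      exact ⟨fun h => h.1, fun h => ⟨h, fun hxX => hdisj x hxX h⟩⟩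
    rw [Dist, he1, he2, hXcard, hb.2] at hdist
    omega
  have hBl_sub : Bl ⊆ (powersetCard l univ).filter (fun x => x ∈ B) := by
    intro x hx
    rw [hBl, mem_filter] at hx
    exact mem_filter.2 ⟨mem_powersetCard_univ.2 hx.2, hx.1⟩
  have htotal : #((powersetCard l univ).filter (fun x => x ∉ B))
      + #((powersetCard l univ).filter (fun x => x ∈ B)) = d.choose l := by
    have h := card_filter_add_card_filter_not (s := powersetCard l (univ : Finset (Fin d)))
      (p := fun x => x ∈ B)
    rw [card_powersetCard, card_univ, Fintype.card_fin] at h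
    omega
  have h1 : #Bs ≤ #((powersetCard l univ).filter (fun x => x ∉ B)) := by
    rw [← hHcard]
    exact hK.trans (card_le_card hsh)
  have h2 : #Bl ≤ #((powersetCard l univ).filter (fun x => x ∈ B)) := card_le_card hBl_sub
  omega

/-- Kleitman's theorem for set families. -/
theorem kleitman_sets {d t : ℕ} (hd : 2 * t < d) (A : Finset (Finset (Fin d)))
    (hA : ∀ s ∈ A, ∀ u ∈ A, Dist s u ≤ 2 * t) :
    #A ≤ ∑ i ∈ range (t + 1), d.choose i := by
  obtain ⟨B, hBcard, hBdist, hBlow⟩ := exists_downset A hA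
  rw [← hBcard]
  rcases B.eq_empty_or_nonempty with rfl | ⟨b0, hb0⟩
  · simp
  have hsize : ∀ x ∈ B, #x ≤ 2 * t := by
    intro x hx
    have hem : (∅ : Finset (Fin d)) ∈ B := hBlow x hx ∅ (empty_subset _)
    have := hBdist x hx ∅ hem
    simpa [Dist] using this
  set c : ℕ → ℕ := fun i => #(B.filter (fun x => #x = i)) with hc
  have hfib : #B = ∑ i ∈ range (2 * t + 1), c i := by
    apply card_eq_sum_card_fiberwise
    intro x hx
    rw [coe_range, Set.mem_Iio]
    exact Nat.lt_succ_of_le (hsize x hx)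
  have hsplit : ∑ i ∈ Ico 0 (t + 1), c i + ∑ i ∈ Ico (t + 1) (2 * t + 1), c i
      = ∑ i ∈ Ico 0 (2 * t + 1), c i :=
    sum_Ico_consecutive c (by omega) (by omega)
  have hreindex : ∑ i ∈ Ico (t + 1) (2 * t + 1), c i
      = ∑ l ∈ Ico 1 (t + 1), c (2 * t + 1 - l) := by
    refine sum_nbij' (fun i => 2 * t + 1 - i) (fun l => 2 * t + 1 - l)
      (fun a ha => ?_) (fun a ha => ?_) (fun a ha => ?_) (fun a ha => ?_) (fun a ha => ?_)
    · simp only [mem_Ico] at ha ⊢; omega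
    · simp only [mem_Ico] at ha ⊢; omega
    · simp only [mem_Ico] at ha; omega
    · simp only [mem_Ico] at ha; omega
    · simp only [mem_Ico] at ha; congr 1; omega
  have hsplit0 : ∑ i ∈ Ico 0 1, c i + ∑ i ∈ Ico 1 (t + 1), c i = ∑ i ∈ Ico 0 (t + 1), c i :=
    sum_Ico_consecutive c (by omega) (by omega)
  have hc0 : c 0 ≤ 1 := by
    rw [hc]
    have : B.filter (fun x => #x = 0) ⊆ {∅} := by
      intro x hx
      rw [mem_filter, card_eq_zero] at hx
      rw [mem_singleton]
      exact hx.2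
    exact (card_le_card this).trans (by simp)
  have hlevel : ∀ l ∈ Ico 1 (t + 1), c (2 * t + 1 - l) + c l ≤ d.choose l := by
    intro l hl
    rw [mem_Ico] at hl
    exact level_bound hd hl.1 (by omega) hBdist hBlow
  calc #B = ∑ i ∈ range (2 * t + 1), c i := hfib
    _ = ∑ i ∈ Ico 0 (t + 1), c i + ∑ l ∈ Ico 1 (t + 1), c (2 * t + 1 - l) := by
        rw [range_eq_Ico] at *
        rw [← hsplit, hreindex]
    _ = ∑ i ∈ Ico 0 1, c i + (∑ i ∈ Ico 1 (t + 1), c i + ∑ l ∈ Ico 1 (t + 1), c (2 * t + 1 - l)) := by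
        rw [← hsplit0]; ring
    _ = c 0 + ∑ l ∈ Ico 1 (t + 1), (c (2 * t + 1 - l) + c l) := by
        rw [sum_add_distrib]
        have h01 : ∑ i ∈ Ico 0 1, c i = c 0 := by simp [Nat.Ico_zero_eq_range]
        rw [h01]
        ring
    _ ≤ 1 + ∑ l ∈ Ico 1 (t + 1), d.choose l := by
        refine Nat.add_le_add hc0 (sum_le_sum hlevel)
    _ = ∑ i ∈ range (t + 1), d.choose i := by
        have : ∑ i ∈ Ico 0 1, d.choose i + ∑ i ∈ Ico 1 (t + 1), d.choose i
            = ∑ i ∈ Ico 0 (t + 1), d.choose i := sum_Ico_consecutive _ (by omega) (by omega)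
        rw [range_eq_Ico, ← this]
        simp [Nat.Ico_zero_eq_range]
end KleitmanAux

/-- Kleitman's theorem, even case. -/
theorem kleitman_even (d t : ℕ) (hd : 2 * t < d) (A : Finset (Fin d → Bool))
    (hA : ∀ u ∈ A, ∀ v ∈ A, distB u v ≤ 2 * t) :
    A.card ≤ ∑ i ∈ Finset.range (t + 1), d.choose i := by
  classical
  set f : (Fin d → Bool) → Finset (Fin d) := fun v => Finset.univ.filter (fun i => v i = true)
    with hf
  have hinj : Function.Injective f := by
    intro u v huv
    funext i
    by_cases h : u i = true
    · have hm : i ∈ f v := huv ▸ (by simp [hf, h])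
      simp only [hf, Finset.mem_filter, Finset.mem_univ, true_and] at hm
      rw [h, hm]
    · have h2 : i ∉ f v := by
        rw [← huv]; simp [hf, h]
      simp only [hf, Finset.mem_filter, Finset.mem_univ, true_and] at h2
      rw [Bool.not_eq_true] at h h2
      rw [h, h2]
  have hdist : ∀ u v : Fin d → Bool, KleitmanAux.Dist (f u) (f v) = distB u v := by
    intro u v
    rw [KleitmanAux.Dist, distB,
      ← Finset.card_union_of_disjoint disjoint_sdiff_sdiff]
    congr 1
    ext i
    simp only [hf, Finset.mem_union, Finset.mem_sdiff, Finset.mem_filter, Finset.mem_univ,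
      true_and, ne_eq]
    cases hu : u i <;> cases hv : v i <;> simp
  have hcard : #(A.image f) = #A := Finset.card_image_of_injective _ hinj
  rw [← hcard]
  apply KleitmanAux.kleitman_sets hd
  intro s hs u hu
  obtain ⟨x, hx, rfl⟩ := Finset.mem_image.1 hs
  obtain ⟨y, hy, rfl⟩ := Finset.mem_image.1 hu
  rw [hdist]
  exact hA x hx y hy
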